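/- Let T be a contraction with constant δ ∈ (0,1) and fixed point x⋆, and let {u_n} be the CR iteration with sequences α_n^i ∈ [0,1]. Then for all n, ‖u_{n+1} - x⋆‖ ≤ [1 - α_n¹(1-δ)]·[1 - α_n²α_n³(1-δ)]·δ·‖u_n - x⋆‖. -/
import Mathlib

lemma combo_norm {B : Type*} [NormedAddCommGroup B] [NormedSpace ℝ B]
    (a : ℝ) (p q z : B) (h0 : 0 ≤ a) (h1 : a ≤ 1) :
    ‖(1 - a) • p + a • q - z‖ ≤ (1 - a) * ‖p - z‖ + a * ‖q - z‖ := by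
  have h : (1 - a) • p + a • q - z = (1 - a) • (p - z) + a • (q - z) := by module
  rw [h]
  calc ‖(1 - a) • (p - z) + a • (q - z)‖
      ≤ ‖(1 - a) • (p - z)‖ + ‖a • (q - z)‖ := norm_add_le _ _
    _ = (1 - a) * ‖p - z‖ + a * ‖q - z‖ := by
        rw [norm_smul, norm_smul, Real.norm_eq_abs, Real.norm_eq_abs,
          abs_of_nonneg (by linarith), abs_of_nonneg h0]

theorem stmt_8 {B : Type*} [NormedAddCommGroup B] [NormedSpace ℝ B] [CompleteSpace B]
    (S : Set B) (hS : S.Nonempty) (hScl : IsClosed S) (hSco : Convex ℝ S)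
    (T : B → B) (hTS : ∀ x ∈ S, T x ∈ S)
    (δ : ℝ) (hδ : δ ∈ Set.Ioo (0 : ℝ) 1)
    (hT : ∀ x ∈ S, ∀ y ∈ S, ‖T x - T y‖ ≤ δ * ‖x - y‖)
    (xs : B) (hxs : xs ∈ S) (hfix : T xs = xs)
    (α1 α2 α3 : ℕ → ℝ)
    (hα1 : ∀ n, α1 n ∈ Set.Icc (0 : ℝ) 1) (hα2 : ∀ n, α2 n ∈ Set.Icc (0 : ℝ) 1)
    (hα3 : ∀ n, α3 n ∈ Set.Icc (0 : ℝ) 1)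
    (u v y : ℕ → B) (hu0 : u 0 ∈ S)
    (hu : ∀ n, u (n + 1) = (1 - α1 n) • v n + α1 n • T (v n))
    (hv : ∀ n, v n = (1 - α2 n) • T (u n) + α2 n • T (y n))
    (hy : ∀ n, y n = (1 - α3 n) • u n + α3 n • T (u n)) :
    ∀ n, ‖u (n + 1) - xs‖ ≤
      (1 - α1 n * (1 - δ)) * (1 - α2 n * α3 n * (1 - δ)) * δ * ‖u n - xs‖ := by
  obtain ⟨hδ0, hδ1⟩ := hδ
  -- membership of all iterates in S
  have hmem : ∀ n, u n ∈ S ∧ y n ∈ S ∧ v n ∈ S := by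
    intro n
    induction n with
    | zero =>
      refine ⟨hu0, ?_, ?_⟩
      · rw [hy]
        exact hSco hu0 (hTS _ hu0) (by linarith [(hα3 0).2]) (hα3 0).1 (by ring)
      · have hy0 : y 0 ∈ S := by
          rw [hy]
          exact hSco hu0 (hTS _ hu0) (by linarith [(hα3 0).2]) (hα3 0).1 (by ring)
        rw [hv]
        exact hSco (hTS _ hu0) (hTS _ hy0) (by linarith [(hα2 0).2]) (hα2 0).1 (by ring)
    | succ n ih =>
      obtain ⟨hun, hyn, hvn⟩ := ih
      have hun1 : u (n + 1) ∈ S := by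
        rw [hu]
        exact hSco hvn (hTS _ hvn) (by linarith [(hα1 n).2]) (hα1 n).1 (by ring)
      have hyn1 : y (n + 1) ∈ S := by
        rw [hy]
        exact hSco hun1 (hTS _ hun1) (by linarith [(hα3 (n+1)).2]) (hα3 (n+1)).1 (by ring)
      refine ⟨hun1, hyn1, ?_⟩
      rw [hv]
      exact hSco (hTS _ hun1) (hTS _ hyn1) (by linarith [(hα2 (n+1)).2]) (hα2 (n+1)).1 (by ring)
  intro n
  obtain ⟨hun, hyn, hvn⟩ := hmem n
  obtain ⟨ha10, ha11⟩ := hα1 n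
  obtain ⟨ha20, ha21⟩ := hα2 n
  obtain ⟨ha30, ha31⟩ := hα3 n
  have hnu : 0 ≤ ‖u n - xs‖ := norm_nonneg _
  -- contraction estimates
  have hTu : ‖T (u n) - xs‖ ≤ δ * ‖u n - xs‖ := by
    have := hT _ hun _ hxs; rwa [hfix] at this
  have hTy : ‖T (y n) - xs‖ ≤ δ * ‖y n - xs‖ := by
    have := hT _ hyn _ hxs; rwa [hfix] at this
  have hTv : ‖T (v n) - xs‖ ≤ δ * ‖v n - xs‖ := by
    have := hT _ hvn _ hxs; rwa [hfix] at this
  have hyb : ‖y n - xs‖ ≤ (1 - α3 n * (1 - δ)) * ‖u n - xs‖ := by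
    rw [hy]
    calc ‖(1 - α3 n) • u n + α3 n • T (u n) - xs‖
        ≤ (1 - α3 n) * ‖u n - xs‖ + α3 n * ‖T (u n) - xs‖ :=
          combo_norm _ _ _ _ ha30 ha31
      _ ≤ (1 - α3 n) * ‖u n - xs‖ + α3 n * (δ * ‖u n - xs‖) := by nlinarith
      _ = (1 - α3 n * (1 - δ)) * ‖u n - xs‖ := by ring
  have hvb : ‖v n - xs‖ ≤ (1 - α2 n * α3 n * (1 - δ)) * δ * ‖u n - xs‖ := by
    rw [hv]
    calc ‖(1 - α2 n) • T (u n) + α2 n • T (y n) - xs‖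
        ≤ (1 - α2 n) * ‖T (u n) - xs‖ + α2 n * ‖T (y n) - xs‖ :=
          combo_norm _ _ _ _ ha20 ha21
      _ ≤ (1 - α2 n) * (δ * ‖u n - xs‖) + α2 n * (δ * ((1 - α3 n * (1 - δ)) * ‖u n - xs‖)) := by
          have h1 : ‖T (y n) - xs‖ ≤ δ * ((1 - α3 n * (1 - δ)) * ‖u n - xs‖) := by
            calc ‖T (y n) - xs‖ ≤ δ * ‖y n - xs‖ := hTy
              _ ≤ δ * ((1 - α3 n * (1 - δ)) * ‖u n - xs‖) := by nlinarith
          nlinarith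
      _ = (1 - α2 n * α3 n * (1 - δ)) * δ * ‖u n - xs‖ := by ring
  have h23 : (0:ℝ) ≤ 1 - α2 n * α3 n * (1 - δ) := by
    have hp : α2 n * α3 n ≤ 1 := by nlinarith
    have := mul_le_mul_of_nonneg_right hp (by linarith : (0:ℝ) ≤ 1 - δ)
    linarith
  have h1f : (0:ℝ) ≤ 1 - α1 n * (1 - δ) := by nlinarith
  rw [hu]
  calc ‖(1 - α1 n) • v n + α1 n • T (v n) - xs‖
      ≤ (1 - α1 n) * ‖v n - xs‖ + α1 n * ‖T (v n) - xs‖ := combo_norm _ _ _ _ ha10 ha11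
    _ ≤ (1 - α1 n) * ‖v n - xs‖ + α1 n * (δ * ‖v n - xs‖) := by nlinarith
    _ = (1 - α1 n * (1 - δ)) * ‖v n - xs‖ := by ring
    _ ≤ (1 - α1 n * (1 - δ)) * ((1 - α2 n * α3 n * (1 - δ)) * δ * ‖u n - xs‖) :=
        mul_le_mul_of_nonneg_left hvb h1f
    _ = (1 - α1 n * (1 - δ)) * (1 - α2 n * α3 n * (1 - δ)) * δ * ‖u n - xs‖ := by ring
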